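/- (One critical point forces wild ramification.) Let L be an algebraically closed field, let d ≥ 2 be an integer, and let f, g ∈ L[X] be coprime polynomials with natDegree f = d and natDegree g = d − 1 (so φ = f/g is a separable rational function of degree d ≥ 2 for which ∞ is a non-critical fixed point). Let W = f'·g − f·g'. If W has exactly one distinct root c ∈ L (i.e., all critical points of φ coincide), then: char L = p > 0; p divides m = rootMultiplicity c (C(g.eval c)·f − C(f.eval c)·g); and rootMultiplicity c W = 2d − 2 (the single critical point has weight 2·deg(φ) − 2). -/

import Mathlib

open Polynomial

private lemma key_rm {L : Type*} [Field L] (c : L) (h k : L[X]) (hh : h ≠ 0)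
    (hk : k.eval c ≠ 0) (hm : ((rootMultiplicity c h : ℕ) : L) ≠ 0) :
    rootMultiplicity c (derivative h * k - h * derivative k) = rootMultiplicity c h - 1 := by
  set m := rootMultiplicity c h with hmdef
  have hm0 : m ≠ 0 := by rintro h0; rw [h0] at hm; simp at hm
  obtain ⟨j, hj⟩ : ∃ j, m = j + 1 :=
    ⟨m - 1, (Nat.succ_pred_eq_of_pos (Nat.pos_of_ne_zero hm0)).symm⟩
  set q := h /ₘ (X - C c) ^ m with hqdef
  have hq : (X - C c) ^ m * q = h := pow_mul_divByMonic_rootMultiplicity_eq h c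
  have hqc : q.eval c ≠ 0 := eval_divByMonic_pow_rootMultiplicity_ne_zero c hh
  set B : L[X] := C (((j : ℕ) + 1 : ℕ) : L) * q * k
      + (X - C c) * (derivative q * k - q * derivative k) with hB
  have hBc : B.eval c ≠ 0 := by
    have hBe : B.eval c = (((j : ℕ) + 1 : ℕ) : L) * q.eval c * k.eval c := by
      simp [hB]
    rw [hBe]
    rw [hj] at hm
    exact mul_ne_zero (mul_ne_zero hm hqc) hk
  have hD : derivative h * k - h * derivative k = (X - C c) ^ j * B := by
    rw [← hq, hj, derivative_mul, derivative_X_sub_C_pow]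
    simp only [Nat.add_sub_cancel, hB, pow_succ]
    push_cast
    ring
  have hBne : B ≠ 0 := fun h0 => hBc (by rw [h0]; simp)
  rw [hD, rootMultiplicity_mul (mul_ne_zero (pow_ne_zero _ (X_sub_C_ne_zero c)) hBne),
    rootMultiplicity_X_sub_C_pow, rootMultiplicity_eq_zero (by simpa [IsRoot] using hBc), hj]
  omega

theorem one_critical_point_wild {L : Type*} [Field L] [IsAlgClosed L] (d : ℕ) (hd : 2 ≤ d)
    (f g : L[X]) (hfg : IsCoprime f g) (hf : f.natDegree = d) (hg : g.natDegree = d - 1)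
    (c : L) (hc : ∀ y : L, (derivative f * g - f * derivative g).IsRoot y ↔ y = c) :
    ringChar L ≠ 0 ∧
    ringChar L ∣ rootMultiplicity c (C (g.eval c) * f - C (f.eval c) * g) ∧
    rootMultiplicity c (derivative f * g - f * derivative g) = 2 * d - 2 := by
  classical
  obtain ⟨e, rfl⟩ : ∃ e, d = e + 1 := ⟨d - 1, by omega⟩
  have he1 : 1 ≤ e := by omega
  set W : L[X] := derivative f * g - f * derivative g with hW
  have hge : g.natDegree = e := by omega
  have hf0 : f ≠ 0 := fun h => by rw [h, natDegree_zero] at hf; omega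
  have hg0 : g ≠ 0 := fun h => by rw [h, natDegree_zero] at hg; omega
  have hab : f.leadingCoeff * g.leadingCoeff ≠ 0 :=
    mul_ne_zero (leadingCoeff_ne_zero.2 hf0) (leadingCoeff_ne_zero.2 hg0)
  have hdf : (derivative f).natDegree ≤ e := by
    have := natDegree_derivative_le f; omega
  have hdg : (derivative g).natDegree ≤ e - 1 := by
    have := natDegree_derivative_le g; omega
  have hlf : f.coeff (e + 1) = f.leadingCoeff := by rw [← hf]; rfl
  have hlg : g.coeff e = g.leadingCoeff := by rw [← hge]; rfl
  have hc1 : (derivative f * g).coeff (e + e) = f.leadingCoeff * g.leadingCoeff * ((e : L) + 1) := by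
    rw [coeff_mul_add_eq_of_natDegree_le hdf hge.le, coeff_derivative, hlf, hlg]; ring
  have hc2 : (f * derivative g).coeff (e + e) = f.leadingCoeff * g.leadingCoeff * (e : L) := by
    have hee : (e + 1) + (e - 1) = e + e := by omega
    rw [← hee, coeff_mul_add_eq_of_natDegree_le hf.le hdg, coeff_derivative]
    have h2 : e - 1 + 1 = e := by omega
    have h3 : ((e - 1 : ℕ) : L) + 1 = (e : L) := by
      rw [Nat.cast_sub he1]; ring
    rw [h2, h3, hlf, hlg]; ring
  have hcoeff : W.coeff (e + e) = f.leadingCoeff * g.leadingCoeff := by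
    rw [hW, coeff_sub, hc1, hc2]; ring
  have hWne : W ≠ 0 := fun h0 => hab (by rw [h0, coeff_zero] at hcoeff; exact hcoeff.symm)
  have hWdeg : W.natDegree = e + e := by
    refine le_antisymm ?_ (le_natDegree_of_ne_zero (by rw [hcoeff]; exact hab))
    refine (natDegree_sub_le _ _).trans (max_le ((natDegree_mul_le).trans (by omega))
      ((natDegree_mul_le).trans (by omega)))
  have hrmW : rootMultiplicity c W = e + e := by
    have hsplit : Splits W := IsAlgClosed.splits W
    have hcard : W.roots.card = W.natDegree := (splits_iff_card_roots).1 hsplit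
    have hcount : W.roots.count c = W.roots.card :=
      Multiset.count_eq_card.2 fun x hx => ((hc x).1 (isRoot_of_mem_roots hx)).symm
    rw [← count_roots, hcount, hcard, hWdeg]
  set u := g.eval c with hu
  set v := f.eval c with hv
  set h : L[X] := C u * f - C v * g with hhdef
  have huv : ¬(v = 0 ∧ u = 0) := by
    rintro ⟨hv0, hu0⟩
    obtain ⟨a, b, hab1⟩ := hfg
    have := congrArg (eval c) hab1
    simp [← hu, ← hv, hv0, hu0] at this
  have hpne : h ≠ 0 := by
    intro h0
    have heq : C u * f = C v * g := sub_eq_zero.1 h0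
    by_cases hu0 : u = 0
    · have hv0 : v ≠ 0 := fun hv0 => huv ⟨hv0, hu0⟩
      rw [hu0, map_zero, zero_mul] at heq
      rcases mul_eq_zero.1 heq.symm with h1 | h1
      · exact hv0 (by simpa using h1)
      · exact hg0 h1
    · have hfe : f = C u⁻¹ * (C v * g) := by
        rw [← heq, ← mul_assoc, ← C_mul, inv_mul_cancel₀ hu0, C_1, one_mul]
      have hdvd : g ∣ f := ⟨C u⁻¹ * C v, by rw [hfe]; ring⟩
      have := natDegree_eq_zero_of_isUnit (hfg.isUnit_of_dvd' hdvd dvd_rfl)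
      omega
  have hroot : h.IsRoot c := by
    simp only [IsRoot, hhdef, eval_sub, eval_mul, eval_C, ← hu, ← hv]
    ring
  have hm1 : 1 ≤ rootMultiplicity c h := (rootMultiplicity_pos hpne).2 hroot
  have hmle : rootMultiplicity c h ≤ e + 1 := by
    have hdvd := pow_rootMultiplicity_dvd h c
    have h1 := natDegree_le_of_dvd hdvd hpne
    rw [natDegree_pow, natDegree_X_sub_C, mul_one] at h1
    have h2 : h.natDegree ≤ e + 1 := by
      refine (natDegree_sub_le _ _).trans (max_le ((natDegree_mul_le).trans ?_)
        ((natDegree_mul_le).trans ?_)) <;> simp [natDegree_C] <;> omega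
    omega
  have hcast : ((rootMultiplicity c h : ℕ) : L) = 0 := by
    by_contra hne
    have hrm : rootMultiplicity c W = rootMultiplicity c h - 1 := by
      by_cases hu0 : u = 0
      · have hv0 : v ≠ 0 := fun hv0 => huv ⟨hv0, hu0⟩
        have hrel : C v * W = derivative h * f - h * derivative f := by
          simp only [hhdef, hW, derivative_sub, derivative_mul, derivative_C]; ring
        have hkey := key_rm c h f hpne (show f.eval c ≠ 0 from hv0) hne
        have hCv : (C v : L[X]) ≠ 0 := fun h1 => hv0 (by simpa using h1)
        have h2 : rootMultiplicity c (C v * W) = rootMultiplicity c W := by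
          rw [rootMultiplicity_mul (mul_ne_zero hCv hWne),
            rootMultiplicity_eq_zero (by simp [IsRoot, hv0]), zero_add]
        rw [← h2, hrel, hkey]
      · have hrel : C u * W = derivative h * g - h * derivative g := by
          simp only [hhdef, hW, derivative_sub, derivative_mul, derivative_C]; ring
        have hkey := key_rm c h g hpne (show g.eval c ≠ 0 from hu0) hne
        have hCu : (C u : L[X]) ≠ 0 := fun h1 => hu0 (by simpa using h1)
        have h2 : rootMultiplicity c (C u * W) = rootMultiplicity c W := by
          rw [rootMultiplicity_mul (mul_ne_zero hCu hWne),
            rootMultiplicity_eq_zero (by simp [IsRoot, hu0]), zero_add]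
        rw [← h2, hrel, hkey]
    omega
  haveI := ringChar.charP L
  have hdvd : ringChar L ∣ rootMultiplicity c h :=
    (CharP.cast_eq_zero_iff L (ringChar L) _).1 hcast
  have hne0 : ringChar L ≠ 0 := by
    intro h0
    rw [h0] at hdvd
    have := zero_dvd_iff.1 hdvd
    omega
  exact ⟨hne0, hdvd, by rw [hrmW]; omega⟩
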